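/- Let λ > 0, t_C ≥ 0, E_C ≥ 0 and let w₁, w₂, s₁, s₂ be positive reals with w₁/s₁ ≥ w₂/s₂ and (s₁, w₁) ≠ (s₂, w₂). Define w = (w₁ + w₂)/2 and s = s_A = (w₁ + w₂)/(w₁/s₁ + w₂/s₂). For a chunk of size ω executed and re-executed at speed v let T(ω, v) = (ω/v + t_C) + λ·(ω/v + t_C)² and E(ω, v) = (ω·v² + E_C)·(1 + λ·(ω/v + t_C)). Then 2·T(w, s) ≤ T(w₁, s₁) + T(w₂, s₂) and 2·E(w, s) < E(w₁, s₁) + E(w₂, s₂). -/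

import Mathlib

private lemma amgm3 (t p q r : ℝ) (hp : 0 ≤ p) (hq : 0 ≤ q) (hr : 0 ≤ r) (ht : 0 ≤ t)
    (h : t ^ 3 = p * q * r) : 3 * t ≤ p + q + r := by
  have hw : (0:ℝ) ≤ 1/3 := by norm_num
  have hmain := Real.geom_mean_le_arith_mean3_weighted hw hw hw hp hq hr (by norm_num)
  have hgeo : p ^ ((1:ℝ)/3) * q ^ ((1:ℝ)/3) * r ^ ((1:ℝ)/3) = t := by
    rw [← Real.mul_rpow hp hq, ← Real.mul_rpow (mul_nonneg hp hq) hr, ← h,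
      ← Real.rpow_natCast t 3, ← Real.rpow_mul ht]
    norm_num
  rw [hgeo] at hmain
  linarith

private lemma Fnonneg (a b x y : ℝ) (ha : 0 ≤ a) (hb : 0 ≤ b) (hx : 0 ≤ x) (hy : 0 ≤ y) :
    0 ≤ a^3*x^3 + b^3*y^3 + 2*a^2*b*x^3 + 2*a*b^2*y^3 - 3*a^2*b*x^2*y - 3*a*b^2*x*y^2 := by
  have h1 := amgm3 (a^2*b*x^2*y) (a^3*x^3) (a^2*b*x^3) (a*b^2*y^3)
    (by positivity) (by positivity) (by positivity) (by positivity) (by ring)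
  have h2 := amgm3 (a*b^2*x*y^2) (b^3*y^3) (a*b^2*y^3) (a^2*b*x^3)
    (by positivity) (by positivity) (by positivity) (by positivity) (by ring)
  linarith

private lemma key_energy (lam tC a b x y : ℝ) (hlam : 0 < lam) (htC : 0 ≤ tC)
    (ha : 0 < a) (hb : 0 < b) (hx : 0 < x) (hy : 0 < y) (hne : a ≠ b ∨ x ≠ y) :
    (a*x + b*y)^3 * (1 + lam*((a+b)/2 + tC))
      < (a+b)^2 * (a*x^3*(1 + lam*(a + tC)) + b*y^3*(1 + lam*(b + tC))) := by
  have hF := Fnonneg a b x y ha.le hb.le hx.le hy.le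
  have hid : (a+b)^2 * (a*x^3*(1 + lam*(a + tC)) + b*y^3*(1 + lam*(b + tC)))
      - (a*x + b*y)^3 * (1 + lam*((a+b)/2 + tC))
      = (1+lam*tC) * (a*b*(x-y)^2*(a*(2*x+y)+b*(x+2*y)))
        + (lam*(a+b)/2) * (a^3*x^3 + b^3*y^3 + 2*a^2*b*x^3 + 2*a*b^2*y^3
            - 3*a^2*b*x^2*y - 3*a*b^2*x*y^2) := by ring
  have h1 : (0:ℝ) < 1 + lam*tC := by nlinarith
  have hP : 0 ≤ a*b*(x-y)^2*(a*(2*x+y)+b*(x+2*y)) := by positivity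
  have hlab : 0 < lam*(a+b)/2 := by positivity
  by_cases hxy : x = y
  · subst hxy
    have hab : a ≠ b := hne.resolve_right (fun h => h rfl)
    have hab' : a - b ≠ 0 := sub_ne_zero.2 hab
    have hFpos : 0 < a^3*x^3 + b^3*x^3 + 2*a^2*b*x^3 + 2*a*b^2*x^3
        - 3*a^2*b*x^2*x - 3*a*b^2*x*x^2 := by
      have : a^3*x^3 + b^3*x^3 + 2*a^2*b*x^3 + 2*a*b^2*x^3
          - 3*a^2*b*x^2*x - 3*a*b^2*x*x^2 = x^3*((a+b)*(a-b)^2) := by ring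
      rw [this]; positivity
    nlinarith [mul_pos hlab hFpos, mul_nonneg h1.le hP]
  · have hxy' : x - y ≠ 0 := sub_ne_zero.2 hxy
    have hPpos : 0 < a*b*(x-y)^2*(a*(2*x+y)+b*(x+2*y)) := by positivity
    nlinarith [mul_pos h1 hPpos, mul_nonneg hlab.le hF]

theorem stmt_12 (lam tC EC w1 w2 s1 s2 : ℝ) (hlam : 0 < lam) (htC : 0 ≤ tC)
    (hEC : 0 ≤ EC) (hw1 : 0 < w1) (hw2 : 0 < w2) (hs1 : 0 < s1) (hs2 : 0 < s2)
    (hord : w2 / s2 ≤ w1 / s1) (hne : (s1, w1) ≠ (s2, w2))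
    (w s : ℝ) (hw : w = (w1 + w2) / 2) (hs : s = (w1 + w2) / (w1 / s1 + w2 / s2))
    (T E : ℝ → ℝ → ℝ)
    (hT : ∀ ω v : ℝ, T ω v = (ω / v + tC) + lam * (ω / v + tC) ^ 2)
    (hE : ∀ ω v : ℝ, E ω v = (ω * v ^ 2 + EC) * (1 + lam * (ω / v + tC))) :
    2 * T w s ≤ T w1 s1 + T w2 s2 ∧ 2 * E w s < E w1 s1 + E w2 s2 := by
  have hd1 : 0 < w1 / s1 := div_pos hw1 hs1
  have hd2 : 0 < w2 / s2 := div_pos hw2 hs2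
  have hD : 0 < w1 / s1 + w2 / s2 := by linarith
  have hDne : w1 / s1 + w2 / s2 ≠ 0 := hD.ne'
  have hsum : (0:ℝ) < w1 + w2 := by linarith
  have hws : w / s = (w1 / s1 + w2 / s2) / 2 := by
    rw [hw, hs]
    field_simp
  have hws2 : w * s ^ 2 = (w1 + w2) ^ 3 / (2 * (w1 / s1 + w2 / s2) ^ 2) := by
    rw [hw, hs]
    field_simp
  constructor
  · rw [hT, hT, hT, hws]
    nlinarith [mul_nonneg hlam.le (sq_nonneg (w1 / s1 - w2 / s2))]
  · have hne' : w1 / s1 ≠ w2 / s2 ∨ s1 ≠ s2 := by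
      by_cases hs12 : s1 = s2
      · left
        intro h
        apply hne
        subst hs12
        have hw12 : w1 = w2 := by
          rw [div_eq_div_iff hs1.ne' hs1.ne'] at h
          exact mul_right_cancel₀ hs1.ne' h
        rw [hw12]
      · right; exact hs12
    have hkey := key_energy lam tC (w1 / s1) (w2 / s2) s1 s2 hlam htC hd1 hd2 hs1 hs2 hne'
    rw [show w1 / s1 * s1 + w2 / s2 * s2 = w1 + w2 by field_simp] at hkey
    rw [show w1 / s1 * s1 ^ 3 = w1 * s1 ^ 2 by field_simp] at hkey
    rw [show w2 / s2 * s2 ^ 3 = w2 * s2 ^ 2 by field_simp] at hkey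
    have hD2 : 0 < (w1 / s1 + w2 / s2) ^ 2 := by positivity
    have hdiv : (w1 + w2) ^ 3 / (w1 / s1 + w2 / s2) ^ 2
          * (1 + lam * ((w1 / s1 + w2 / s2) / 2 + tC))
        < w1 * s1 ^ 2 * (1 + lam * (w1 / s1 + tC))
          + w2 * s2 ^ 2 * (1 + lam * (w2 / s2 + tC)) := by
      rw [div_mul_eq_mul_div, div_lt_iff₀ hD2]
      nlinarith [hkey]
    rw [hE, hE, hE, hws, hws2]
    have hEeq : 2 * (((w1 + w2) ^ 3 / (2 * (w1 / s1 + w2 / s2) ^ 2) + EC)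
          * (1 + lam * ((w1 / s1 + w2 / s2) / 2 + tC)))
        = (w1 + w2) ^ 3 / (w1 / s1 + w2 / s2) ^ 2
            * (1 + lam * ((w1 / s1 + w2 / s2) / 2 + tC))
          + EC * (1 + lam * (w1 / s1 + tC)) + EC * (1 + lam * (w2 / s2 + tC)) := by
      field_simp
      ring
    rw [hEeq]
    linarith [hdiv]
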